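/- Let R be a commutative ring. Then R is a U√Δ-ring if and only if R is a local ring. -/

import Mathlib

/-- Δ(R) = {x : 1 - x*u is a unit for every unit u}. -/
def Delta (R : Type*) [Ring R] : Set R :=
  {x | ∀ u : R, IsUnit u → IsUnit (1 - x * u)}

/-- √Δ(R) = {x : x^n ∈ Δ(R) for some n ≥ 1}. -/
def sqrtDelta (R : Type*) [Ring R] : Set R :=
  {x | ∃ n : ℕ, 1 ≤ n ∧ x ^ n ∈ Delta R}

/-- R is a U√Δ-ring if every non-unit is a product of a unit and an element of √Δ(R). -/
def IsUSqrtDeltaRing (R : Type*) [Ring R] : Prop :=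
  ∀ a : R, ¬ IsUnit a → ∃ u b : R, IsUnit u ∧ b ∈ sqrtDelta R ∧ a = u * b

theorem stmt_15 {R : Type*} [CommRing R] [Nontrivial R] :
    IsUSqrtDeltaRing R ↔ IsLocalRing R := by
  constructor
  · intro h
    apply IsLocalRing.of_isUnit_or_isUnit_one_sub_self
    intro a
    by_cases ha : IsUnit a
    · exact Or.inl ha
    · right
      obtain ⟨u, b, hu, ⟨n, hn, hb⟩, rfl⟩ := h a ha
      have h1 : IsUnit (1 - (b * u) ^ n) := by
        rw [mul_pow]; exact hb (u ^ n) (hu.pow n)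
      have hdvd : (1 - b * u) ∣ (1 - (b * u) ^ n) := by
        have := sub_dvd_pow_sub_pow (1 : R) (b * u) n
        simpa using this
      have : IsUnit (1 - b * u) := isUnit_of_dvd_unit hdvd h1
      rwa [mul_comm u b]
  · intro h a ha
    haveI : IsLocalRing R := h
    refine ⟨1, a, isUnit_one, ⟨1, le_refl 1, ?_⟩, (one_mul a).symm⟩
    intro v hv
    rw [pow_one]
    have hav : ¬ IsUnit (a * v) := fun hu => ha (isUnit_of_mul_isUnit_left hu)
    rcases IsLocalRing.isUnit_or_isUnit_of_add_one (a := a * v) (b := 1 - a * v)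
      (by ring) with h1 | h1
    · exact absurd h1 hav
    · exact h1
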